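/- Concavity of the N-CIRL one-stage backup in the belief: let v : Δ(Θ) → ℝ be concave, and define [Gv](b) = max_{A ∈ 𝒜(b)} min_{δ ∈ Δ(D)} { ∑_{a,d,ϑ} A_ϑ(a) δ(d) r(a,d,ϑ) + γ ∑_{a,d} δ(d) m(a) q(a,d) v(b_a) }, where 𝒜(b) = { A ≥ 0 : ∑_a A_ϑ(a) = b(ϑ) ∀ϑ }, m(a) = ∑_ϑ A_ϑ(a), q(a,d) ∈ [0,1], and b_a(ϑ) = A_ϑ(a)/m(a) when m(a) > 0. Then b ↦ [Gv](b) is concave on Δ(Θ). -/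

import Mathlib

open Finset

/-- The probability simplex over a finite type, as a subtype. -/
def Simplex (D : Type*) [Fintype D] : Type _ :=
  {δ : D → ℝ // (∀ d, 0 ≤ δ d) ∧ ∑ d, δ d = 1}

section Aux
variable {Θ : Type*} [Fintype Θ] [Nonempty Θ]

/-- A concave function on the standard simplex is bounded below. -/
lemma NCIRL.concave_lower (v : (Θ → ℝ) → ℝ) (hv : ConcaveOn ℝ (stdSimplex ℝ Θ) v) :
    ∃ L, ∀ x ∈ stdSimplex ℝ Θ, L ≤ v x := by
  classical
  refine ⟨univ.inf' univ_nonempty (fun ϑ => v (Pi.single ϑ 1)), fun x hx => ?_⟩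
  have hx' : (∑ ϑ, x ϑ • (Pi.single ϑ (1:ℝ) : Θ → ℝ)) = x := by
    funext ϑ'
    simp [Finset.sum_apply, Pi.single_apply]
  have jensen := hv.le_map_sum (t := univ) (w := x) (p := fun ϑ => Pi.single ϑ 1)
    (fun i _ => hx.1 i) hx.2 (fun i _ => single_mem_stdSimplex ℝ i)
  rw [hx'] at jensen
  refine le_trans ?_ jensen
  calc univ.inf' univ_nonempty (fun ϑ => v (Pi.single ϑ 1))
      = ∑ ϑ, x ϑ * univ.inf' univ_nonempty (fun ϑ => v (Pi.single ϑ 1)) := by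
        rw [← Finset.sum_mul, hx.2, one_mul]
    _ ≤ ∑ ϑ, x ϑ • v (Pi.single ϑ 1) := by
        refine Finset.sum_le_sum fun ϑ _ => ?_
        simpa [smul_eq_mul] using
          mul_le_mul_of_nonneg_left (Finset.inf'_le _ (mem_univ ϑ)) (hx.1 ϑ)

/-- A concave function on the standard simplex is bounded above. -/
lemma NCIRL.concave_upper (v : (Θ → ℝ) → ℝ) (hv : ConcaveOn ℝ (stdSimplex ℝ Θ) v) :
    ∃ U, ∀ x ∈ stdSimplex ℝ Θ, v x ≤ U := by
  obtain ⟨L, hL⟩ := NCIRL.concave_lower v hv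
  set n : ℝ := (Fintype.card Θ : ℝ) with hn
  have hn1 : (1:ℝ) ≤ n := by
    rw [hn]
    exact_mod_cast Nat.one_le_iff_ne_zero.mpr (Fintype.card_ne_zero (α := Θ))
  have hn0 : 0 < n := lt_of_lt_of_le one_pos hn1
  set u : Θ → ℝ := fun _ => n⁻¹ with hu
  have husum : ∑ _ϑ : Θ, n⁻¹ = 1 := by
    rw [Finset.sum_const, Finset.card_univ, nsmul_eq_mul, ← hn, mul_inv_cancel₀ hn0.ne']
  have humem : u ∈ stdSimplex ℝ Θ := ⟨fun _ => by positivity, husum⟩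
  refine ⟨(n+1) * v u - n * L, fun x hx => ?_⟩
  set z : Θ → ℝ := fun ϑ => (1/n) * ((n+1)/n - x ϑ) with hz
  have hxle : ∀ ϑ, x ϑ ≤ 1 := fun ϑ => by
    calc x ϑ ≤ ∑ ϑ', x ϑ' := Finset.single_le_sum (fun i _ => hx.1 i) (mem_univ ϑ)
    _ = 1 := hx.2
  have hzmem : z ∈ stdSimplex ℝ Θ := by
    constructor
    · intro ϑ
      have := hxle ϑ
      have h2 : (0:ℝ) ≤ (n+1)/n - 1 := by
        rw [sub_nonneg, le_div_iff₀ hn0]; linarith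
      have h3 : (0:ℝ) ≤ (n+1)/n - x ϑ := by linarith
      positivity
    · rw [hz]
      rw [← Finset.mul_sum, Finset.sum_sub_distrib, Finset.sum_const, Finset.card_univ, hx.2]
      rw [nsmul_eq_mul, ← hn]
      field_simp
      ring
  have hcomb : (1/(n+1)) • x + (n/(n+1)) • z = u := by
    funext ϑ
    simp only [Pi.add_apply, Pi.smul_apply, smul_eq_mul, hz, hu]
    field_simp
    try ring
  have hsum1 : (1/(n+1)) + (n/(n+1)) = 1 := by field_simp; try ring
  have hnn1 : (0:ℝ) < n + 1 := by linarith
  have hkey := hv.2 hx hzmem (by positivity) (by positivity) hsum1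
  rw [hcomb] at hkey
  have hLz := hL z hzmem
  have h1 : (1/(n+1)) * v x + (n/(n+1)) * L ≤ v u := by
    have : (1/(n+1)) * v x + (n/(n+1)) * v z ≤ v u := by simpa [smul_eq_mul] using hkey
    have h2 : (n/(n+1)) * L ≤ (n/(n+1)) * v z :=
      mul_le_mul_of_nonneg_left hLz (by positivity)
    linarith
  have := mul_le_mul_of_nonneg_left h1 (le_of_lt hnn1)
  calc v x = (n+1) * ((1/(n+1)) * v x + (n/(n+1)) * L) - n * L := by field_simp; try ring
    _ ≤ (n+1) * v u - n * L := by linarith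

/-- membership of the normalized posterior in the simplex -/
lemma NCIRL.posterior_mem (p : Θ → ℝ) (h0 : ∀ ϑ, 0 ≤ p ϑ) (hm : 0 < ∑ ϑ, p ϑ) :
    (fun ϑ => p ϑ / ∑ ϑ', p ϑ') ∈ stdSimplex ℝ Θ := by
  constructor
  · intro ϑ; exact div_nonneg (h0 ϑ) hm.le
  · rw [← Finset.sum_div, div_self hm.ne']

/-- The key concavity step: `m ↦ m · v(p/m)` superadditivity along convex combinations. -/
lemma NCIRL.key_step (v : (Θ → ℝ) → ℝ) (hv : ConcaveOn ℝ (stdSimplex ℝ Θ) v)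
    (p₁ p₂ : Θ → ℝ) (h₁ : ∀ ϑ, 0 ≤ p₁ ϑ) (h₂ : ∀ ϑ, 0 ≤ p₂ ϑ)
    (t s : ℝ) (ht : 0 ≤ t) (hs : 0 ≤ s) :
    t * ((∑ ϑ, p₁ ϑ) * v (fun ϑ => p₁ ϑ / ∑ ϑ', p₁ ϑ')) +
      s * ((∑ ϑ, p₂ ϑ) * v (fun ϑ => p₂ ϑ / ∑ ϑ', p₂ ϑ')) ≤
    (∑ ϑ, (t * p₁ ϑ + s * p₂ ϑ)) *
      v (fun ϑ => (t * p₁ ϑ + s * p₂ ϑ) / ∑ ϑ', (t * p₁ ϑ' + s * p₂ ϑ')) := by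
  set m₁ := ∑ ϑ, p₁ ϑ with hm₁
  set m₂ := ∑ ϑ, p₂ ϑ with hm₂
  have hm₁0 : 0 ≤ m₁ := Finset.sum_nonneg fun ϑ _ => h₁ ϑ
  have hm₂0 : 0 ≤ m₂ := Finset.sum_nonneg fun ϑ _ => h₂ ϑ
  have hmsum : ∑ ϑ, (t * p₁ ϑ + s * p₂ ϑ) = t * m₁ + s * m₂ := by
    rw [Finset.sum_add_distrib, ← Finset.mul_sum, ← Finset.mul_sum]
  simp only [hmsum]
  set α := t * m₁ with hα
  set β := s * m₂ with hβ
  have hα0 : 0 ≤ α := mul_nonneg ht hm₁0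
  have hβ0 : 0 ≤ β := mul_nonneg hs hm₂0
  set x₁ : Θ → ℝ := fun ϑ => p₁ ϑ / m₁ with hx₁
  set x₂ : Θ → ℝ := fun ϑ => p₂ ϑ / m₂ with hx₂
  rcases eq_or_lt_of_le (add_nonneg hα0 hβ0) with hm | hm
  · -- α + β = 0, hence α = β = 0 and everything vanishes
    have hα' : α = 0 := by linarith
    have hβ' : β = 0 := by linarith
    have e1 : t * (m₁ * v x₁) = 0 := by rw [← mul_assoc, ← hα, hα', zero_mul]
    have e2 : s * (m₂ * v x₂) = 0 := by rw [← mul_assoc, ← hβ, hβ', zero_mul]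
    rw [e1, e2, ← hm]
    simp
  · by_cases hα' : α = 0
    · -- only the second component contributes
      have hβpos : 0 < β := by rw [hα'] at hm; linarith
      obtain ⟨hs', hm₂'⟩ : 0 < s ∧ 0 < m₂ := by
        rcases mul_pos_iff.mp (hβ ▸ hβpos) with h | ⟨h1, h2⟩
        · exact h
        · exact absurd h2 (not_lt.mpr hm₂0)
      have hp0 : ∀ ϑ, t * p₁ ϑ = 0 := by
        intro ϑ
        rcases mul_eq_zero.mp (hα ▸ hα') with h | h
        · rw [h, zero_mul]
        · have := (Finset.sum_eq_zero_iff_of_nonneg (fun i _ => h₁ i)).mp (hm₁ ▸ h) ϑ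
            (mem_univ ϑ)
          rw [this, mul_zero]
      have hvarg : (fun ϑ => (t * p₁ ϑ + s * p₂ ϑ) / (α + β)) = x₂ := by
        funext ϑ
        rw [hp0 ϑ, zero_add, hα', zero_add, hβ, hx₂]
        exact mul_div_mul_left _ _ hs'.ne'
      rw [hvarg]
      have e1 : t * (m₁ * v x₁) = 0 := by rw [← mul_assoc, ← hα, hα', zero_mul]
      have e2 : (α + β) * v x₂ = s * (m₂ * v x₂) := by rw [hα', hβ]; ring
      linarith
    · by_cases hβ' : β = 0
      · -- only the first component contributes
        have hαpos : 0 < α := lt_of_le_of_ne hα0 (Ne.symm hα')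
        obtain ⟨ht', hm₁'⟩ : 0 < t ∧ 0 < m₁ := by
          rcases mul_pos_iff.mp (hα ▸ hαpos) with h | ⟨h1, h2⟩
          · exact h
          · exact absurd h2 (not_lt.mpr hm₁0)
        have hp0 : ∀ ϑ, s * p₂ ϑ = 0 := by
          intro ϑ
          rcases mul_eq_zero.mp (hβ ▸ hβ') with h | h
          · rw [h, zero_mul]
          · have := (Finset.sum_eq_zero_iff_of_nonneg (fun i _ => h₂ i)).mp (hm₂ ▸ h) ϑ
              (mem_univ ϑ)
            rw [this, mul_zero]
        have hvarg : (fun ϑ => (t * p₁ ϑ + s * p₂ ϑ) / (α + β)) = x₁ := by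
          funext ϑ
          rw [hp0 ϑ, add_zero, hβ', add_zero, hα, hx₁]
          exact mul_div_mul_left _ _ ht'.ne'
        rw [hvarg]
        have e1 : s * (m₂ * v x₂) = 0 := by rw [← mul_assoc, ← hβ, hβ', zero_mul]
        have e2 : (α + β) * v x₁ = t * (m₁ * v x₁) := by rw [hβ', hα]; ring
        linarith
      · -- genuine convex combination
        have hαpos : 0 < α := lt_of_le_of_ne hα0 (Ne.symm hα')
        have hβpos : 0 < β := lt_of_le_of_ne hβ0 (Ne.symm hβ')
        obtain ⟨ht', hm₁'⟩ : 0 < t ∧ 0 < m₁ := by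
          rcases mul_pos_iff.mp (hα ▸ hαpos) with h | ⟨h1, h2⟩
          · exact h
          · exact absurd h2 (not_lt.mpr hm₁0)
        obtain ⟨hs', hm₂'⟩ : 0 < s ∧ 0 < m₂ := by
          rcases mul_pos_iff.mp (hβ ▸ hβpos) with h | ⟨h1, h2⟩
          · exact h
          · exact absurd h2 (not_lt.mpr hm₂0)
        have x₁mem : x₁ ∈ stdSimplex ℝ Θ := by
          rw [hx₁]; simp only [hm₁]
          exact NCIRL.posterior_mem p₁ h₁ (hm₁ ▸ hm₁')
        have x₂mem : x₂ ∈ stdSimplex ℝ Θ := by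
          rw [hx₂]; simp only [hm₂]
          exact NCIRL.posterior_mem p₂ h₂ (hm₂ ▸ hm₂')
        have hcomb : (fun ϑ => (t * p₁ ϑ + s * p₂ ϑ) / (α + β)) =
            (α/(α+β)) • x₁ + (β/(α+β)) • x₂ := by
          funext ϑ
          simp only [Pi.add_apply, Pi.smul_apply, smul_eq_mul, hx₁, hx₂, hα, hβ]
          field_simp
        have hsum1 : α/(α+β) + β/(α+β) = 1 := by
          rw [← add_div, div_self hm.ne']
        have hkey := hv.2 x₁mem x₂mem (div_nonneg hα0 hm.le) (div_nonneg hβ0 hm.le) hsum1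
        rw [← hcomb] at hkey
        simp only [smul_eq_mul] at hkey
        have := mul_le_mul_of_nonneg_left hkey hm.le
        have e : (α+β) * (α/(α+β) * v x₁ + β/(α+β) * v x₂)
            = t * (m₁ * v x₁) + s * (m₂ * v x₂) := by
          field_simp
          ring
        linarith
end Aux

lemma NCIRL.lin_comb {ι : Type*} [Fintype ι] (t s : ℝ) (g₁ g₂ : ι → ℝ) :
    t * ∑ i, g₁ i + s * ∑ i, g₂ i = ∑ i, (t * g₁ i + s * g₂ i) := by
  simp only [Finset.mul_sum, ← Finset.sum_add_distrib]

section Aux2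
variable {Θ A D : Type*} [Fintype Θ] [Fintype A] [Fintype D]

/-- The backup integrand. -/
@[reducible] noncomputable def NCIRL.Phi (γ : ℝ) (r : A → D → Θ → ℝ) (q : A → D → ℝ)
    (v : (Θ → ℝ) → ℝ) (Av : Θ → A → ℝ) (δ : D → ℝ) : ℝ :=
  (∑ a, ∑ d, ∑ ϑ, Av ϑ a * δ d * r a d ϑ) +
    γ * ∑ a, ∑ d, δ d * (∑ ϑ, Av ϑ a) * q a d *
      v (fun ϑ => Av ϑ a / ∑ ϑ', Av ϑ' a)

/-- The feasible set of joint variables for a belief `b`. -/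
@[reducible] def NCIRL.Feas (A : Type*) [Fintype A] (b : Θ → ℝ) : Type _ :=
  {Av : Θ → A → ℝ // (∀ ϑ a, 0 ≤ Av ϑ a) ∧ ∀ ϑ, ∑ a, Av ϑ a = b ϑ}

/-- Pointwise (per-δ) superadditivity of the backup integrand in the joint variable. -/
lemma NCIRL.superadd [Nonempty Θ]
    (γ : ℝ) (hγ0 : 0 ≤ γ) (r : A → D → Θ → ℝ) (q : A → D → ℝ)
    (hq0 : ∀ a d, 0 ≤ q a d)
    (v : (Θ → ℝ) → ℝ) (hv : ConcaveOn ℝ (stdSimplex ℝ Θ) v)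
    (A₁ A₂ A₃ : Θ → A → ℝ)
    (h₁ : ∀ ϑ a, 0 ≤ A₁ ϑ a) (h₂ : ∀ ϑ a, 0 ≤ A₂ ϑ a)
    (t s : ℝ) (ht : 0 ≤ t) (hs : 0 ≤ s)
    (hA₃ : ∀ ϑ a, A₃ ϑ a = t * A₁ ϑ a + s * A₂ ϑ a)
    (δ : D → ℝ) (hδ : ∀ d, 0 ≤ δ d) :
    t * NCIRL.Phi γ r q v A₁ δ + s * NCIRL.Phi γ r q v A₂ δ ≤ NCIRL.Phi γ r q v A₃ δ := by
  unfold NCIRL.Phi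
  have hX : (∑ a, ∑ d, ∑ ϑ, A₃ ϑ a * δ d * r a d ϑ)
      = t * (∑ a, ∑ d, ∑ ϑ, A₁ ϑ a * δ d * r a d ϑ)
        + s * (∑ a, ∑ d, ∑ ϑ, A₂ ϑ a * δ d * r a d ϑ) := by
    rw [NCIRL.lin_comb t s]
    refine Finset.sum_congr rfl fun a _ => ?_
    rw [NCIRL.lin_comb t s]
    refine Finset.sum_congr rfl fun d _ => ?_
    rw [NCIRL.lin_comb t s]
    refine Finset.sum_congr rfl fun ϑ _ => ?_
    rw [hA₃]; ring
  have hY : t * (∑ a, ∑ d, δ d * (∑ ϑ, A₁ ϑ a) * q a d *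
            v (fun ϑ => A₁ ϑ a / ∑ ϑ', A₁ ϑ' a))
        + s * (∑ a, ∑ d, δ d * (∑ ϑ, A₂ ϑ a) * q a d *
            v (fun ϑ => A₂ ϑ a / ∑ ϑ', A₂ ϑ' a))
      ≤ ∑ a, ∑ d, δ d * (∑ ϑ, A₃ ϑ a) * q a d *
            v (fun ϑ => A₃ ϑ a / ∑ ϑ', A₃ ϑ' a) := by
    rw [NCIRL.lin_comb t s]
    refine Finset.sum_le_sum fun a _ => ?_
    rw [NCIRL.lin_comb t s]
    refine Finset.sum_le_sum fun d _ => ?_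
    have hkey := NCIRL.key_step v hv (fun ϑ => A₁ ϑ a) (fun ϑ => A₂ ϑ a)
      (fun ϑ => h₁ ϑ a) (fun ϑ => h₂ ϑ a) t s ht hs
    have hargs : (fun ϑ => A₃ ϑ a / ∑ ϑ', A₃ ϑ' a)
        = fun ϑ => (t * A₁ ϑ a + s * A₂ ϑ a) / ∑ ϑ', (t * A₁ ϑ' a + s * A₂ ϑ' a) := by
      funext ϑ
      rw [hA₃]
      congr 1
      exact Finset.sum_congr rfl fun ϑ' _ => hA₃ ϑ' a
    have hsum3 : (∑ ϑ, A₃ ϑ a) = ∑ ϑ, (t * A₁ ϑ a + s * A₂ ϑ a) :=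
      Finset.sum_congr rfl fun ϑ' _ => hA₃ ϑ' a
    rw [hargs, hsum3]
    have hc : 0 ≤ δ d * q a d := mul_nonneg (hδ d) (hq0 a d)
    have := mul_le_mul_of_nonneg_left hkey hc
    nlinarith [this]
  calc t * (_ + γ * _) + s * (_ + γ * _)
      = (t * (∑ a, ∑ d, ∑ ϑ, A₁ ϑ a * δ d * r a d ϑ)
          + s * (∑ a, ∑ d, ∑ ϑ, A₂ ϑ a * δ d * r a d ϑ))
        + γ * ((t * (∑ a, ∑ d, δ d * (∑ ϑ, A₁ ϑ a) * q a d *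
            v (fun ϑ => A₁ ϑ a / ∑ ϑ', A₁ ϑ' a))
          + s * (∑ a, ∑ d, δ d * (∑ ϑ, A₂ ϑ a) * q a d *
            v (fun ϑ => A₂ ϑ a / ∑ ϑ', A₂ ϑ' a)))) := by ring
    _ ≤ _ := by
        rw [hX]
        have := mul_le_mul_of_nonneg_left hY hγ0
        linarith

/-- The backup integrand is bounded below over the simplex of `δ`'s. -/
lemma NCIRL.bddBelow_phi (γ : ℝ) (hγ0 : 0 ≤ γ) (r : A → D → Θ → ℝ) (q : A → D → ℝ)
    (v : (Θ → ℝ) → ℝ) (Av : Θ → A → ℝ) :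
    BddBelow (Set.range fun δ : Simplex D => NCIRL.Phi γ r q v Av δ.1) := by
  refine ⟨-(∑ a, ∑ d, ∑ ϑ, |Av ϑ a * r a d ϑ|) +
    γ * -(∑ a, ∑ d, |(∑ ϑ, Av ϑ a) * q a d *
      v (fun ϑ => Av ϑ a / ∑ ϑ', Av ϑ' a)|), ?_⟩
  rintro x ⟨δ, rfl⟩
  have hδ1 : ∀ d, δ.1 d ≤ 1 := fun d => by
    calc δ.1 d ≤ ∑ d', δ.1 d' :=
          Finset.single_le_sum (fun d' _ => δ.2.1 d') (Finset.mem_univ d)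
      _ = 1 := δ.2.2
  have hδa : ∀ d, |δ.1 d| ≤ 1 := fun d => abs_le.mpr ⟨by linarith [δ.2.1 d], hδ1 d⟩
  unfold NCIRL.Phi
  apply add_le_add
  · have e : -(∑ a, ∑ d, ∑ ϑ, |Av ϑ a * r a d ϑ|)
        = ∑ a, ∑ d, ∑ ϑ, -|Av ϑ a * r a d ϑ| := by simp
    rw [e]
    refine Finset.sum_le_sum fun a _ => Finset.sum_le_sum fun d _ =>
      Finset.sum_le_sum fun ϑ _ => ?_
    have habs : |Av ϑ a * δ.1 d * r a d ϑ| ≤ |Av ϑ a * r a d ϑ| := by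
      rw [abs_mul, abs_mul (Av ϑ a) (r a d ϑ), abs_mul]
      nlinarith [abs_nonneg (Av ϑ a), abs_nonneg (r a d ϑ), abs_nonneg (δ.1 d), hδa d,
        mul_nonneg (mul_nonneg (abs_nonneg (Av ϑ a)) (abs_nonneg (r a d ϑ)))
          (sub_nonneg.mpr (hδa d))]
    linarith [neg_abs_le (Av ϑ a * δ.1 d * r a d ϑ)]
  · refine mul_le_mul_of_nonneg_left ?_ hγ0
    have e : -(∑ a, ∑ d, |(∑ ϑ, Av ϑ a) * q a d *
          v (fun ϑ => Av ϑ a / ∑ ϑ', Av ϑ' a)|)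
        = ∑ a, ∑ d, -|(∑ ϑ, Av ϑ a) * q a d *
          v (fun ϑ => Av ϑ a / ∑ ϑ', Av ϑ' a)| := by simp
    rw [e]
    refine Finset.sum_le_sum fun a _ => Finset.sum_le_sum fun d _ => ?_
    set X := (∑ ϑ, Av ϑ a) * q a d * v (fun ϑ => Av ϑ a / ∑ ϑ', Av ϑ' a) with hX
    have h2 : δ.1 d * (∑ ϑ, Av ϑ a) * q a d * v (fun ϑ => Av ϑ a / ∑ ϑ', Av ϑ' a)
        = δ.1 d * X := by rw [hX]; ring
    rw [h2]
    have habs2 : |δ.1 d * X| ≤ |X| := by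
      rw [abs_mul]
      nlinarith [abs_nonneg X, hδa d, mul_nonneg (abs_nonneg X) (sub_nonneg.mpr (hδa d))]
    linarith [neg_abs_le (δ.1 d * X)]


/-- Uniform upper bound of the backup integrand over the feasible set. -/
lemma NCIRL.phi_upper [Nonempty Θ] (γ : ℝ) (hγ0 : 0 ≤ γ) (r : A → D → Θ → ℝ)
    (q : A → D → ℝ) (hq0 : ∀ a d, 0 ≤ q a d) (hq1 : ∀ a d, q a d ≤ 1)
    (v : (Θ → ℝ) → ℝ)
    (U' : ℝ) (hU'0 : 0 ≤ U') (hU' : ∀ x ∈ stdSimplex ℝ Θ, v x ≤ U')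
    (R : ℝ) (hR : ∀ a d ϑ, |r a d ϑ| ≤ R)
    (b : Θ → ℝ) (hb : b ∈ stdSimplex ℝ Θ) (Av : NCIRL.Feas A b) (δ : Simplex D) :
    NCIRL.Phi γ r q v Av.1 δ.1 ≤ R + γ * U' := by
  have hδ1 : ∀ d, δ.1 d ≤ 1 := fun d => by
    calc δ.1 d ≤ ∑ d', δ.1 d' :=
          Finset.single_le_sum (fun d' _ => δ.2.1 d') (Finset.mem_univ d)
      _ = 1 := δ.2.2
  have hm0 : ∀ a, 0 ≤ ∑ ϑ, Av.1 ϑ a := fun a => Finset.sum_nonneg fun ϑ _ => Av.2.1 ϑ a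
  have hmargsum : ∑ a, ∑ ϑ, Av.1 ϑ a = 1 := by
    rw [Finset.sum_comm]
    calc ∑ ϑ, ∑ a, Av.1 ϑ a = ∑ ϑ, b ϑ := Finset.sum_congr rfl fun ϑ _ => Av.2.2 ϑ
      _ = 1 := hb.2
  unfold NCIRL.Phi
  apply add_le_add
  · -- reward term ≤ R
    calc ∑ a, ∑ d, ∑ ϑ, Av.1 ϑ a * δ.1 d * r a d ϑ
        ≤ ∑ a, ∑ d, ∑ ϑ, Av.1 ϑ a * δ.1 d * R := by
          refine Finset.sum_le_sum fun a _ => Finset.sum_le_sum fun d _ =>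
            Finset.sum_le_sum fun ϑ _ => ?_
          exact mul_le_mul_of_nonneg_left ((le_abs_self _).trans (hR a d ϑ))
            (mul_nonneg (Av.2.1 ϑ a) (δ.2.1 d))
      _ = ∑ a, ∑ d, (∑ ϑ, Av.1 ϑ a) * δ.1 d * R := by
          refine Finset.sum_congr rfl fun a _ => Finset.sum_congr rfl fun d _ => ?_
          rw [Finset.sum_mul, Finset.sum_mul]
      _ = ∑ a, (∑ ϑ, Av.1 ϑ a) * R := by
          refine Finset.sum_congr rfl fun a _ => ?_
          calc ∑ d, (∑ ϑ, Av.1 ϑ a) * δ.1 d * R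
              = ∑ d, ((∑ ϑ, Av.1 ϑ a) * R) * δ.1 d :=
                Finset.sum_congr rfl fun d _ => by ring
            _ = ((∑ ϑ, Av.1 ϑ a) * R) * ∑ d, δ.1 d := (Finset.mul_sum _ _ _).symm
            _ = (∑ ϑ, Av.1 ϑ a) * R := by rw [δ.2.2, mul_one]
      _ = (∑ a, ∑ ϑ, Av.1 ϑ a) * R := (Finset.sum_mul _ _ _).symm
      _ = R := by rw [hmargsum, one_mul]
  · -- value term ≤ γ * U'
    refine mul_le_mul_of_nonneg_left ?_ hγ0
    calc ∑ a, ∑ d, δ.1 d * (∑ ϑ, Av.1 ϑ a) * q a d *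
          v (fun ϑ => Av.1 ϑ a / ∑ ϑ', Av.1 ϑ' a)
        ≤ ∑ a, ∑ d, δ.1 d * (∑ ϑ, Av.1 ϑ a) * U' := by
          refine Finset.sum_le_sum fun a _ => Finset.sum_le_sum fun d _ => ?_
          rcases eq_or_lt_of_le (hm0 a) with hma | hma
          · rw [← hma]; simp
          · have hvv : v (fun ϑ => Av.1 ϑ a / ∑ ϑ', Av.1 ϑ' a) ≤ U' :=
              hU' _ (NCIRL.posterior_mem _ (fun ϑ => Av.2.1 ϑ a) hma)
            nlinarith [mul_nonneg (mul_nonneg (mul_nonneg (δ.2.1 d) (hm0 a)) (hq0 a d))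
                (sub_nonneg.mpr hvv),
              mul_nonneg (mul_nonneg (mul_nonneg (δ.2.1 d) (hm0 a))
                (sub_nonneg.mpr (hq1 a d))) hU'0]
      _ = ∑ a, (∑ ϑ, Av.1 ϑ a) * U' := by
          refine Finset.sum_congr rfl fun a _ => ?_
          calc ∑ d, δ.1 d * (∑ ϑ, Av.1 ϑ a) * U'
              = ∑ d, ((∑ ϑ, Av.1 ϑ a) * U') * δ.1 d :=
                Finset.sum_congr rfl fun d _ => by ring
            _ = ((∑ ϑ, Av.1 ϑ a) * U') * ∑ d, δ.1 d := (Finset.mul_sum _ _ _).symm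
            _ = (∑ ϑ, Av.1 ϑ a) * U' := by rw [δ.2.2, mul_one]
      _ = (∑ a, ∑ ϑ, Av.1 ϑ a) * U' := (Finset.sum_mul _ _ _).symm
      _ = U' := by rw [hmargsum, one_mul]

end Aux2

/-- Concavity in the belief of the N-CIRL one-stage primal backup
(Proposition 1): with joint variables `Av ϑ a` encoding `π^A(a|ϑ)b(ϑ)`,
marginal `m(a) = ∑_ϑ Av ϑ a` and posterior `b_a(ϑ) = Av ϑ a / m(a)`, the backup
`[Gv](b) = max_{Av ∈ 𝒜(b)} min_{δ ∈ Δ(D)} { ∑ Av ϑ a · δ d · r(a,d,ϑ)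
  + γ ∑ δ d · m(a) · q(a,d) · v(b_a) }`
of a concave `v` is concave on the simplex. -/
theorem primal_backup_preserves_concavity
    {Θ A D : Type*} [Fintype Θ] [Fintype A] [Fintype D]
    [Nonempty Θ] [Nonempty A] [Nonempty D]
    (γ : ℝ) (hγ0 : 0 ≤ γ) (hγ1 : γ < 1)
    (r : A → D → Θ → ℝ)
    (q : A → D → ℝ) (hq0 : ∀ a d, 0 ≤ q a d) (hq1 : ∀ a d, q a d ≤ 1)
    (v : (Θ → ℝ) → ℝ) (hv : ConcaveOn ℝ (stdSimplex ℝ Θ) v)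
    (Gv : (Θ → ℝ) → ℝ)
    (hG : ∀ b : Θ → ℝ, Gv b =
      ⨆ Av : {Av : Θ → A → ℝ // (∀ ϑ a, 0 ≤ Av ϑ a) ∧ ∀ ϑ, ∑ a, Av ϑ a = b ϑ},
        ⨅ δ : Simplex D,
          ((∑ a, ∑ d, ∑ ϑ, Av.1 ϑ a * δ.1 d * r a d ϑ) +
            γ * ∑ a, ∑ d, δ.1 d * (∑ ϑ, Av.1 ϑ a) * q a d *
              v (fun ϑ => Av.1 ϑ a / ∑ ϑ', Av.1 ϑ' a))) :
    ConcaveOn ℝ (stdSimplex ℝ Θ) Gv := by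
  classical
  obtain ⟨L, hL⟩ := NCIRL.concave_lower v hv
  obtain ⟨U, hU⟩ := NCIRL.concave_upper v hv
  set U' : ℝ := max U 0 with hU'def
  have hU'0 : 0 ≤ U' := le_max_right _ _
  have hU' : ∀ x ∈ stdSimplex ℝ Θ, v x ≤ U' := fun x hx => (hU x hx).trans (le_max_left _ _)
  obtain ⟨R, hR⟩ : ∃ R, ∀ a d ϑ, |r a d ϑ| ≤ R := by
    refine ⟨∑ x : A × D × Θ, |r x.1 x.2.1 x.2.2|, fun a d ϑ => ?_⟩
    exact Finset.single_le_sum (f := fun x : A × D × Θ => |r x.1 x.2.1 x.2.2|)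
      (fun x _ => abs_nonneg _) (Finset.mem_univ (a, d, ϑ))
  haveI hneD : Nonempty (Simplex D) :=
    ⟨⟨fun _ => (Fintype.card D : ℝ)⁻¹, fun d => by positivity, by
      rw [Finset.sum_const, Finset.card_univ, nsmul_eq_mul, mul_inv_cancel₀]
      exact_mod_cast (Fintype.card_ne_zero (α := D))⟩⟩
  have hG' : ∀ b, Gv b = ⨆ Av : NCIRL.Feas A b,
      ⨅ δ : Simplex D, NCIRL.Phi γ r q v Av.1 δ.1 := hG
  have hFne : ∀ b : Θ → ℝ, b ∈ stdSimplex ℝ Θ → Nonempty (NCIRL.Feas A b) := by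
    intro b hb
    refine ⟨⟨fun ϑ a => if a = Classical.arbitrary A then b ϑ else 0, fun ϑ a => ?_, fun ϑ => ?_⟩⟩
    · by_cases hcase : a = Classical.arbitrary A
      · simp only [hcase, if_pos rfl]
        exact hb.1 ϑ
      · simp [hcase]
    · simp
  refine ⟨convex_stdSimplex ℝ Θ, fun b₁ hb₁ b₂ hb₂ t s ht hs hts => ?_⟩
  rcases eq_or_lt_of_le ht with h | htpos
  · have hs1 : s = 1 := by linarith
    rw [← h, hs1]
    simp
  rcases eq_or_lt_of_le hs with h | hspos
  · have ht1 : t = 1 := by linarith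
    rw [← h, ht1]
    simp
  set bb : Θ → ℝ := t • b₁ + s • b₂ with hbbdef
  have hbb : bb ∈ stdSimplex ℝ Θ := convex_stdSimplex ℝ Θ hb₁ hb₂ ht hs hts
  haveI := hFne b₁ hb₁
  haveI := hFne b₂ hb₂
  haveI := hFne bb hbb
  have hBA : BddAbove (Set.range fun Av : NCIRL.Feas A bb =>
      ⨅ δ : Simplex D, NCIRL.Phi γ r q v Av.1 δ.1) := by
    refine ⟨R + γ * U', ?_⟩
    rintro x ⟨Av, rfl⟩
    exact ciInf_le_of_le (NCIRL.bddBelow_phi γ hγ0 r q v Av.1) (Classical.arbitrary _)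
      (NCIRL.phi_upper γ hγ0 r q hq0 hq1 v U' hU'0 hU' R hR bb hbb Av _)
  have core : ∀ (A₁ : NCIRL.Feas A b₁) (A₂ : NCIRL.Feas A b₂),
      t * (⨅ δ : Simplex D, NCIRL.Phi γ r q v A₁.1 δ.1) +
        s * (⨅ δ : Simplex D, NCIRL.Phi γ r q v A₂.1 δ.1) ≤ Gv bb := by
    intro A₁ A₂
    have hA₃nn : ∀ ϑ a, 0 ≤ t * A₁.1 ϑ a + s * A₂.1 ϑ a := fun ϑ a =>
      add_nonneg (mul_nonneg ht (A₁.2.1 ϑ a)) (mul_nonneg hs (A₂.2.1 ϑ a))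
    have hA₃sum : ∀ ϑ, ∑ a, (t * A₁.1 ϑ a + s * A₂.1 ϑ a) = bb ϑ := by
      intro ϑ
      rw [← NCIRL.lin_comb t s, A₁.2.2 ϑ, A₂.2.2 ϑ]
      simp [hbbdef]
    set A₃ : NCIRL.Feas A bb := ⟨fun ϑ a => t * A₁.1 ϑ a + s * A₂.1 ϑ a, hA₃nn, hA₃sum⟩
      with hA₃def
    have step1 : t * (⨅ δ : Simplex D, NCIRL.Phi γ r q v A₁.1 δ.1) +
        s * (⨅ δ : Simplex D, NCIRL.Phi γ r q v A₂.1 δ.1) ≤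
        ⨅ δ : Simplex D, NCIRL.Phi γ r q v A₃.1 δ.1 := by
      refine le_ciInf fun δ => ?_
      have i1 := ciInf_le (NCIRL.bddBelow_phi γ hγ0 r q v A₁.1) δ
      have i2 := ciInf_le (NCIRL.bddBelow_phi γ hγ0 r q v A₂.1) δ
      have hsup := NCIRL.superadd γ hγ0 r q hq0 v hv A₁.1 A₂.1 A₃.1 A₁.2.1 A₂.2.1
        t s htpos.le hspos.le (fun ϑ a => rfl) δ.1 δ.2.1
      have := add_le_add (mul_le_mul_of_nonneg_left i1 htpos.le)
        (mul_le_mul_of_nonneg_left i2 hspos.le)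
      exact le_trans this hsup
    have step2 : (⨅ δ : Simplex D, NCIRL.Phi γ r q v A₃.1 δ.1) ≤ Gv bb := by
      rw [hG' bb]
      exact le_ciSup hBA A₃
    exact le_trans step1 step2
  have h2 : ∀ A₁ : NCIRL.Feas A b₁,
      t * (⨅ δ : Simplex D, NCIRL.Phi γ r q v A₁.1 δ.1) + s * Gv b₂ ≤ Gv bb := by
    intro A₁
    have hdiv : Gv b₂ ≤ (Gv bb - t * (⨅ δ : Simplex D, NCIRL.Phi γ r q v A₁.1 δ.1)) / s := by
      rw [hG' b₂]
      refine ciSup_le fun A₂ => ?_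
      rw [le_div_iff₀ hspos]
      have := core A₁ A₂
      linarith
    have := mul_le_mul_of_nonneg_left hdiv hspos.le
    rw [mul_div_cancel₀ _ hspos.ne'] at this
    linarith
  have h3 : Gv b₁ ≤ (Gv bb - s * Gv b₂) / t := by
    rw [hG' b₁]
    refine ciSup_le fun A₁ => ?_
    rw [le_div_iff₀ htpos]
    have := h2 A₁
    linarith
  have h4 := mul_le_mul_of_nonneg_left h3 htpos.le
  rw [mul_div_cancel₀ _ htpos.ne'] at h4
  simp only [smul_eq_mul]
  linarith
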